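/- arXiv:1708.03227 — 4 statements merged into one kernel-verified Lean document; each statement's English description precedes it below -/
import Mathlib

section
/- For every i ≥ 0 and every real s ≠ 0, the function τ_i agrees with the power series (-1)^i · Σ_{k=0}^∞ s^{2k} / ((2k)! · (2k+1)(2k+3)···(2k+2i-1)), which converges on all of ℝ; in particular τ_i extends to an even analytic function on ℝ with τ_i(0) = (-1)^i / (1·3·5···(2i-1)). -/
/-- τ₀(s) = cosh s, τ_{i+1}(s) = -(1/s)·τ_i'(s). -/
noncomputable def tau : ℕ → ℝ → ℝ
  | 0 => fun s => Real.cosh s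
  | (i+1) => fun s => -(1/s) * deriv (tau i) s

/-- The power series (-1)^i · Σ_k s^{2k} / ((2k)!·(2k+1)(2k+3)···(2k+2i-1)). -/
noncomputable def tauSeries (i : ℕ) (s : ℝ) : ℝ :=
  (-1 : ℝ) ^ i *
    ∑' k : ℕ, s ^ (2 * k) /
      (((2 * k).factorial * ∏ j ∈ Finset.range i, (2 * k + 2 * j + 1) : ℕ) : ℝ)


open Finset FormalMultilinearSeries

/-- The denominator coefficients. -/
noncomputable def dcoef (i k : ℕ) : ℝ :=
  (((2 * k).factorial * ∏ j ∈ Finset.range i, (2 * k + 2 * j + 1) : ℕ) : ℝ)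

lemma dcoef_pos (i k : ℕ) : 0 < dcoef i k := by
  have : 0 < (2 * k).factorial * ∏ j ∈ Finset.range i, (2 * k + 2 * j + 1) :=
    Nat.mul_pos (Nat.factorial_pos _) (Finset.prod_pos fun j _ => by omega)
  unfold dcoef
  exact_mod_cast this

lemma dcoef_ge (i k : ℕ) : (k.factorial : ℝ) ≤ dcoef i k := by
  have h1 : k.factorial ≤ (2 * k).factorial := Nat.factorial_le (by omega)
  have : k.factorial ≤ (2 * k).factorial * ∏ j ∈ Finset.range i, (2 * k + 2 * j + 1) :=
    le_trans h1 (Nat.le_mul_of_pos_right _ (Finset.prod_pos fun j _ => by omega))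
  unfold dcoef
  exact_mod_cast this

lemma dcoef_key (i k : ℕ) : dcoef i (k + 1) = dcoef (i + 1) k * (2 * k + 2) := by
  have hnat : (2 * (k + 1)).factorial * ∏ j ∈ Finset.range i, (2 * (k + 1) + 2 * j + 1)
      = ((2 * k).factorial * ∏ j ∈ Finset.range (i + 1), (2 * k + 2 * j + 1)) * (2 * k + 2) := by
    have h1 : (2 * (k + 1)).factorial = (2 * k + 2) * ((2 * k + 1) * (2 * k).factorial) := by
      have e : 2 * (k + 1) = (2 * k + 1) + 1 := by ring
      rw [e, Nat.factorial_succ, Nat.factorial_succ]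
    have h2 : ∏ j ∈ Finset.range (i + 1), (2 * k + 2 * j + 1)
        = (∏ j ∈ Finset.range i, (2 * (k + 1) + 2 * j + 1)) * (2 * k + 1) := by
      rw [Finset.prod_range_succ']
      congr 1
      exact Finset.prod_congr rfl fun j _ => by ring
    rw [h1, h2]
    ring
  unfold dcoef
  exact_mod_cast hnat

lemma summable_dcoef (i : ℕ) (s : ℝ) :
    Summable (fun k : ℕ => s ^ (2 * k) / dcoef i k) := by
  refine Summable.of_nonneg_of_le (fun k => ?_) (fun k => ?_)
    (Real.summable_pow_div_factorial (s ^ 2))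
  · exact div_nonneg (by rw [pow_mul]; positivity) (dcoef_pos i k).le
  · rw [pow_mul]
    exact div_le_div_of_nonneg_left (by positivity) (by positivity) (dcoef_ge i k)

lemma summable_bound (x : ℝ) : Summable (fun k : ℕ => 2 * x ^ k / (k.factorial : ℝ)) := by
  simpa [mul_div_assoc] using (Real.summable_pow_div_factorial x).mul_left 2

/-- The sum version of τ without the sign. -/
noncomputable def F (i : ℕ) (s : ℝ) : ℝ := ∑' k : ℕ, s ^ (2 * k) / dcoef i k

lemma tauSeries_eq (i : ℕ) (s : ℝ) : tauSeries i s = (-1 : ℝ) ^ i * F i s := rfl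

/-- Norm bound for the derivative series. -/
lemma deriv_bound (i : ℕ) (R : ℝ) (hR : 1 ≤ R) (y : ℝ) (hy : |y| ≤ R) (k : ℕ) :
    ‖((2 * k : ℕ) : ℝ) * y ^ (2 * k - 1) / dcoef i k‖ ≤ 2 * (2 * R ^ 2) ^ k / k.factorial := by
  have hR0 : 0 < R := lt_of_lt_of_le zero_lt_one hR
  have h1 : ‖((2 * k : ℕ) : ℝ) * y ^ (2 * k - 1) / dcoef i k‖
      = ((2 * k : ℕ) : ℝ) * |y| ^ (2 * k - 1) / dcoef i k := by
    rw [norm_div, norm_mul, norm_pow, Real.norm_eq_abs, Real.norm_eq_abs, Real.norm_eq_abs,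
      abs_of_nonneg (by positivity : (0:ℝ) ≤ ((2 * k : ℕ) : ℝ)), abs_of_pos (dcoef_pos i k)]
  rw [h1]
  have h2 : |y| ^ (2 * k - 1) ≤ R ^ (2 * k) :=
    le_trans (pow_le_pow_left₀ (abs_nonneg y) hy _) (pow_le_pow_right₀ hR (by omega))
  have h3 : ((2 * k : ℕ) : ℝ) ≤ 2 * 2 ^ k := by
    have : (k : ℝ) ≤ 2 ^ k := by exact_mod_cast (Nat.lt_two_pow_self (n := k)).le
    push_cast
    nlinarith
  have hnum : ((2 * k : ℕ) : ℝ) * |y| ^ (2 * k - 1) ≤ (2 * 2 ^ k) * R ^ (2 * k) :=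
    mul_le_mul h3 h2 (by positivity) (by positivity)
  calc ((2 * k : ℕ) : ℝ) * |y| ^ (2 * k - 1) / dcoef i k
      ≤ (2 * 2 ^ k) * R ^ (2 * k) / (k.factorial : ℝ) :=
        div_le_div₀ (by positivity) hnum (by positivity) (dcoef_ge i k)
    _ = 2 * (2 * R ^ 2) ^ k / k.factorial := by rw [pow_mul, mul_pow]; ring

lemma summable_deriv (i : ℕ) (s : ℝ) :
    Summable (fun k : ℕ => ((2 * k : ℕ) : ℝ) * s ^ (2 * k - 1) / dcoef i k) :=
  Summable.of_norm_bounded (summable_bound (2 * (|s| + 1) ^ 2))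
    (fun k => deriv_bound i (|s| + 1) (by linarith [abs_nonneg s]) s
      (by linarith [abs_nonneg s]) k)

lemma hasDerivAt_F (i : ℕ) (s : ℝ) :
    HasDerivAt (F i) (∑' k : ℕ, ((2 * k : ℕ) : ℝ) * s ^ (2 * k - 1) / dcoef i k) s := by
  have habs : (0:ℝ) ≤ |s| := abs_nonneg s
  have hR : 1 ≤ |s| + 1 := by linarith
  have hball : s ∈ Metric.ball (0 : ℝ) (|s| + 1) := by
    simp [Real.dist_eq]
  have h := hasDerivAt_tsum_of_isPreconnected
    (u := fun k : ℕ => 2 * (2 * (|s| + 1) ^ 2) ^ k / (k.factorial : ℝ))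
    (g := fun (k : ℕ) (y : ℝ) => y ^ (2 * k) / dcoef i k)
    (g' := fun (k : ℕ) (y : ℝ) => ((2 * k : ℕ) : ℝ) * y ^ (2 * k - 1) / dcoef i k)
    (summable_bound (2 * (|s| + 1) ^ 2))
    Metric.isOpen_ball (convex_ball (0:ℝ) (|s| + 1)).isPreconnected
    (fun k y _ => (hasDerivAt_pow (2 * k) y).div_const (dcoef i k))
    (fun k y hy => by
      have hy' : |y| ≤ |s| + 1 := by
        have := Metric.mem_ball.mp hy
        rw [Real.dist_eq, sub_zero] at this
        linarith
      exact deriv_bound i (|s| + 1) hR y hy' k)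
    (Metric.mem_ball_self (by positivity))
    (summable_dcoef i 0) hball
  exact h

lemma deriv_sum_eq (i : ℕ) (s : ℝ) :
    ∑' k : ℕ, ((2 * k : ℕ) : ℝ) * s ^ (2 * k - 1) / dcoef i k = s * F (i + 1) s := by
  rw [Summable.tsum_eq_zero_add (summable_deriv i s)]
  simp only [Nat.mul_zero, Nat.cast_zero, zero_mul, zero_div, zero_add]
  have key : ∀ k : ℕ, ((2 * (k + 1) : ℕ) : ℝ) * s ^ (2 * (k + 1) - 1) / dcoef i (k + 1)
      = s * (s ^ (2 * k) / dcoef (i + 1) k) := by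
    intro k
    have h2 : 2 * (k + 1) - 1 = 2 * k + 1 := by omega
    rw [h2, dcoef_key i k]
    have hd : dcoef (i + 1) k ≠ 0 := (dcoef_pos _ _).ne'
    have h22 : (2 * (k : ℝ) + 2) ≠ 0 := by positivity
    push_cast
    field_simp
    ring
  rw [tsum_congr key, tsum_mul_left]
  rfl

lemma F_even (i : ℕ) (s : ℝ) : F i (-s) = F i s := by
  unfold F
  exact tsum_congr fun k => by rw [pow_mul, pow_mul, neg_sq]

/-- The power-series coefficients of `tauSeries i`. -/
noncomputable def tcoef (i : ℕ) : ℕ → ℝ :=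
  fun n => if Even n then (-1 : ℝ) ^ i / dcoef i (n / 2) else 0

lemma tcoef_even (i k : ℕ) : tcoef i (2 * k) = (-1 : ℝ) ^ i / dcoef i k := by
  simp [tcoef, even_two_mul k, Nat.mul_div_cancel_left k (by norm_num : 0 < 2)]

lemma tcoef_odd (i k : ℕ) : tcoef i (2 * k + 1) = 0 := by
  simp [tcoef, Nat.even_add_one, parity_simps]

lemma summable_tcoef_even (i : ℕ) (s : ℝ) :
    Summable fun k : ℕ => tcoef i (2 * k) • s ^ (2 * k) := by
  refine ((summable_dcoef i s).mul_left ((-1 : ℝ) ^ i)).congr fun k => ?_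
  rw [tcoef_even, smul_eq_mul]
  ring

lemma tauSeries_eq_ofScalarsSum (i : ℕ) :
    tauSeries i = FormalMultilinearSeries.ofScalarsSum (E := ℝ) (tcoef i) := by
  funext s
  rw [FormalMultilinearSeries.ofScalars_sum_eq]
  have hodd : Summable fun k : ℕ => tcoef i (2 * k + 1) • s ^ (2 * k + 1) := by
    simpa [tcoef_odd] using summable_zero
  have h := tsum_even_add_odd (f := fun n => tcoef i n • s ^ n)
    (summable_tcoef_even i s) hodd
  rw [← h]
  simp only [tcoef_odd, zero_smul, tsum_zero, add_zero]
  rw [tauSeries_eq, F, ← tsum_mul_left]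
  exact tsum_congr fun k => by rw [tcoef_even, smul_eq_mul]; ring

lemma radius_top (i : ℕ) : (FormalMultilinearSeries.ofScalars ℝ (tcoef i)).radius = ⊤ := by
  rw [eq_top_iff]
  refine ENNReal.le_of_forall_nnreal_lt fun r _ => ?_
  apply FormalMultilinearSeries.le_radius_of_summable_norm
  simp only [FormalMultilinearSeries.ofScalars_norm]
  have hinj : Function.Injective (fun k : ℕ => 2 * k) := fun a b h => Nat.eq_of_mul_eq_mul_left (by norm_num) h
  refine (hinj.summable_iff (f := fun n => ‖tcoef i n‖ * (r : ℝ) ^ n) fun n hn => ?_).mp ?_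
  · have hodd : ¬ Even n := by
      simp only [Set.mem_range, not_exists] at hn
      rintro ⟨m, rfl⟩
      exact hn m (by ring)
    simp [tcoef, hodd]
  · refine Summable.of_nonneg_of_le (fun k => by simp only [Function.comp_apply]; positivity)
      (fun k => ?_) (Real.summable_pow_div_factorial ((r : ℝ) ^ 2))
    have hnorm : ‖tcoef i (2 * k)‖ = 1 / dcoef i k := by
      rw [tcoef_even, norm_div, norm_pow, norm_neg, norm_one, one_pow,
        Real.norm_eq_abs, abs_of_pos (dcoef_pos i k)]
    simp only [Function.comp_apply]
    rw [hnorm, pow_mul, div_mul_eq_mul_div, one_mul]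
    exact div_le_div_of_nonneg_left (by positivity) (by positivity) (dcoef_ge i k)

lemma hasFPB (i : ℕ) :
    HasFPowerSeriesOnBall (tauSeries i) (FormalMultilinearSeries.ofScalars ℝ (tcoef i)) 0 ⊤ := by
  have h := (FormalMultilinearSeries.ofScalars ℝ (tcoef i)).hasFPowerSeriesOnBall
    (by rw [radius_top]; exact ENNReal.zero_lt_top)
  rw [radius_top] at h
  have he : (FormalMultilinearSeries.ofScalars ℝ (tcoef i)).sum
      = FormalMultilinearSeries.ofScalarsSum (E := ℝ) (tcoef i) := rfl
  rwa [he, ← tauSeries_eq_ofScalarsSum] at h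

lemma tauSeries_analytic (i : ℕ) : AnalyticOn ℝ (tauSeries i) Set.univ := by
  have h : AnalyticOnNhd ℝ (tauSeries i) Set.univ := fun x _ =>
    (hasFPB i).analyticAt_of_mem (by simp [Metric.emetric_ball_top])
  exact h.analyticOn

lemma tau_eq_tauSeries (i : ℕ) : ∀ s : ℝ, s ≠ 0 → tau i s = tauSeries i s := by
  induction i with
  | zero =>
    intro s _
    show Real.cosh s = tauSeries 0 s
    rw [tauSeries_eq, pow_zero, one_mul, Real.cosh_eq_tsum]
    exact tsum_congr fun k => by unfold dcoef; simp
  | succ i ih =>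
    intro s hs
    have hEq : deriv (tau i) s = deriv (tauSeries i) s := by
      have hev : ∀ᶠ x in nhds s, x ≠ 0 := eventually_ne_nhds hs
      exact Filter.EventuallyEq.deriv_eq (hev.mono fun x hx => ih x hx)
    have hDA : HasDerivAt (tauSeries i)
        ((-1 : ℝ) ^ i * ∑' k : ℕ, ((2 * k : ℕ) : ℝ) * s ^ (2 * k - 1) / dcoef i k) s :=
      ((hasDerivAt_F i s).const_mul ((-1 : ℝ) ^ i)).congr_of_eventuallyEq
        (Filter.Eventually.of_forall fun x => tauSeries_eq i x)
    have hderiv : deriv (tauSeries i) s = (-1 : ℝ) ^ i * (s * F (i + 1) s) := by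
      rw [hDA.deriv, deriv_sum_eq]
    show -(1 / s) * deriv (tau i) s = tauSeries (i + 1) s
    rw [hEq, hderiv, tauSeries_eq, pow_succ]
    field_simp

theorem tau_series_extension (i : ℕ) :
    (∀ s : ℝ, Summable (fun k : ℕ => s ^ (2 * k) /
      (((2 * k).factorial * ∏ j ∈ Finset.range i, (2 * k + 2 * j + 1) : ℕ) : ℝ))) ∧
    (∀ s : ℝ, s ≠ 0 → tau i s = tauSeries i s) ∧
    AnalyticOn ℝ (tauSeries i) Set.univ ∧
    (∀ s : ℝ, tauSeries i (-s) = tauSeries i s) ∧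
    tauSeries i 0 = (-1 : ℝ) ^ i / ((∏ j ∈ Finset.range i, (2 * j + 1) : ℕ) : ℝ) := by
  refine ⟨fun s => summable_dcoef i s, tau_eq_tauSeries i, tauSeries_analytic i, ?_, ?_⟩
  · intro s
    rw [tauSeries_eq, tauSeries_eq, F_even]
  · rw [tauSeries_eq]
    unfold F
    rw [tsum_eq_single 0 (fun k hk => by
      rw [zero_pow (by omega : 2 * k ≠ 0), zero_div])]
    unfold dcoef
    norm_num
    rw [div_eq_mul_inv]
end

section
/- For all i ≥ 0 and s ≠ 0, the function τ_i satisfies the second-order differential equation τ_i''(s) + (2i/s)·τ_i'(s) − τ_i(s) = 0. -/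
lemma tau_smooth (i : ℕ) : ContDiffOn ℝ ⊤ (tau i) {(0:ℝ)}ᶜ := by
  induction i with
  | zero => exact Real.contDiff_cosh.contDiffOn
  | succ i ih =>
    show ContDiffOn ℝ ⊤ (fun s => -(1/s) * deriv (tau i) s) _
    have h1 : ContDiffOn ℝ ⊤ (fun s : ℝ => -(1/s)) {(0:ℝ)}ᶜ := by
      simpa [one_div] using (contDiffOn_inv ℝ (𝕜' := ℝ)).neg
    exact h1.mul (ih.deriv_of_isOpen isOpen_compl_singleton le_top)

lemma diffAt_of_smooth {f : ℝ → ℝ} (hf : ContDiffOn ℝ ⊤ f {(0:ℝ)}ᶜ) {s : ℝ}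
    (hs : s ≠ 0) : DifferentiableAt ℝ f s :=
  (hf.contDiffAt (isOpen_compl_singleton.mem_nhds hs)).differentiableAt (by simp)

theorem tau_ode (i : ℕ) (s : ℝ) (hs : s ≠ 0) :
    deriv (deriv (tau i)) s + (2 * (i : ℝ) / s) * deriv (tau i) s - tau i s = 0 := by
  induction i generalizing s with
  | zero =>
    simp only [tau, Nat.cast_zero]
    rw [show (fun s => Real.cosh s) = Real.cosh from rfl, Real.deriv_cosh, Real.deriv_sinh]
    ring
  | succ i ih =>
    set f := tau i with hf
    have hsm := tau_smooth i
    have hsm1 : ContDiffOn ℝ ⊤ (deriv f) {(0:ℝ)}ᶜ :=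
      hsm.deriv_of_isOpen isOpen_compl_singleton le_top
    have hsm2 : ContDiffOn ℝ ⊤ (deriv (deriv f)) {(0:ℝ)}ᶜ :=
      hsm1.deriv_of_isOpen isOpen_compl_singleton le_top
    have hdiff : ∀ t : ℝ, t ≠ 0 → DifferentiableAt ℝ f t :=
      fun t ht => diffAt_of_smooth hsm ht
    have hdiff1 : ∀ t : ℝ, t ≠ 0 → DifferentiableAt ℝ (deriv f) t :=
      fun t ht => diffAt_of_smooth hsm1 ht
    have hdiff2 : ∀ t : ℝ, t ≠ 0 → DifferentiableAt ℝ (deriv (deriv f)) t :=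
      fun t ht => diffAt_of_smooth hsm2 ht
    have hev : ∀ t : ℝ, tau (i+1) t = -(1/t) * deriv f t := fun t => rfl
    have hD1 : ∀ t : ℝ, t ≠ 0 → deriv (tau (i+1)) t
        = (t^2)⁻¹ * deriv f t + -(1/t) * deriv (deriv f) t := by
      intro t ht
      have h1 : HasDerivAt (fun u : ℝ => -(1/u)) ((t^2)⁻¹) t := by
        simpa [one_div] using (hasDerivAt_inv ht).fun_neg
      have h2 : HasDerivAt (deriv f) (deriv (deriv f) t) t := (hdiff1 t ht).hasDerivAt
      have h3 := h1.fun_mul h2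
      have heq : (fun u : ℝ => -(1/u) * deriv f u) = tau (i+1) := rfl
      rw [heq] at h3
      exact h3.deriv
    have hD2 : deriv (deriv (tau (i+1))) s
        = (-(2*s)/(s^2)^2 * deriv f s + (s^2)⁻¹ * deriv (deriv f) s)
          - (-(s^2)⁻¹ * deriv (deriv f) s + s⁻¹ * deriv (deriv (deriv f)) s) := by
      have hev' : deriv (tau (i+1)) =ᶠ[nhds s]
          fun u => (u^2)⁻¹ * deriv f u - u⁻¹ * deriv (deriv f) u := by
        filter_upwards [isOpen_compl_singleton.mem_nhds hs] with u hu
        rw [hD1 u hu, one_div]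
        ring
      rw [hev'.deriv_eq]
      have h1 : HasDerivAt (fun u : ℝ => (u^2)⁻¹ * deriv f u)
          (-(2*s)/(s^2)^2 * deriv f s + (s^2)⁻¹ * deriv (deriv f) s) s := by
        have ha : HasDerivAt (fun u : ℝ => (u^2)⁻¹) (-(2*s)/(s^2)^2) s := by
          simpa using (hasDerivAt_pow 2 s).fun_inv (pow_ne_zero 2 hs)
        exact ha.mul (hdiff1 s hs).hasDerivAt
      have h2 : HasDerivAt (fun u : ℝ => u⁻¹ * deriv (deriv f) u)
          (-(s^2)⁻¹ * deriv (deriv f) s + s⁻¹ * deriv (deriv (deriv f)) s) s := by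
        have hb := (hasDerivAt_inv hs).fun_mul (hdiff2 s hs).hasDerivAt
        simpa using hb
      exact (h1.sub h2).deriv
    have hD3 : deriv (deriv (deriv f)) s
        = deriv f s - ((2*(i:ℝ)) * -(s^2)⁻¹ * deriv f s + (2*(i:ℝ)/s) * deriv (deriv f) s) := by
      have hev' : deriv (deriv f) =ᶠ[nhds s]
          fun u => f u - (2*(i:ℝ)/u) * deriv f u := by
        filter_upwards [isOpen_compl_singleton.mem_nhds hs] with u hu
        have h := ih u hu
        linarith
      rw [hev'.deriv_eq]
      have h1 : HasDerivAt f (deriv f s) s := (hdiff s hs).hasDerivAt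
      have h2 : HasDerivAt (fun u : ℝ => (2*(i:ℝ)/u) * deriv f u)
          ((2*(i:ℝ)) * -(s^2)⁻¹ * deriv f s + (2*(i:ℝ)/s) * deriv (deriv f) s) s := by
        have ha : HasDerivAt (fun u : ℝ => 2*(i:ℝ)/u) ((2*(i:ℝ)) * -(s^2)⁻¹) s := by
          simpa [div_eq_mul_inv] using (hasDerivAt_inv hs).const_mul (2*(i:ℝ))
        exact ha.mul (hdiff1 s hs).hasDerivAt
      exact (h1.sub h2).deriv
    rw [hD2, hD1 s hs, hev s, hD3]
    have hs2 : (s:ℝ)^2 ≠ 0 := pow_ne_zero _ hs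
    push_cast
    field_simp
    ring
end

section
/- For all i ≥ 0 and R > 0, the improper integral ∫_R^∞ χ_i(r)·e^{-r} dr equals e^{-R}·χ_{i+1}(R)/R, where χ_i is the i-th reverse Bessel polynomial. -/
/-- The reverse Bessel polynomials. -/
noncomputable def chi : ℕ → Polynomial ℤ
  | 0 => 1
  | 1 => Polynomial.X
  | (i+2) => Polynomial.X ^ 2 * chi i + Polynomial.C (2 * (i : ℤ) + 1) * chi (i+1)

open Polynomial

/-- Auxiliary polynomials: `chiAux i = chi (i+1) / X`. -/
noncomputable def chiAux : ℕ → Polynomial ℤ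
  | 0 => 1
  | 1 => Polynomial.X + 1
  | (i+2) => Polynomial.X ^ 2 * chiAux i + Polynomial.C (2 * (i : ℤ) + 3) * chiAux (i+1)

lemma X_mul_chiAux (i : ℕ) : X * chiAux i = chi (i+1) := by
  induction i using Nat.twoStepInduction with
  | zero => simp [chiAux, chi]
  | one => simp [chiAux, chi]; ring
  | more i h1 h2 =>
      show X * (X ^ 2 * chiAux i + C (2 * (i : ℤ) + 3) * chiAux (i+1)) = chi (i+3)
      have : chi (i+3) = X ^ 2 * chi (i+1) + C (2 * ((i:ℤ)+1) + 1) * chi (i+2) := by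
        show chi (i+1+2) = _
        rw [chi]; push_cast; ring_nf
      rw [this, ← h1, ← h2]; push_cast; ring

lemma chiAux_sub_deriv (i : ℕ) : chiAux i - derivative (chiAux i) = chi i := by
  induction i using Nat.twoStepInduction with
  | zero => simp [chiAux, chi]
  | one => simp [chiAux, chi]
  | more i h1 h2 =>
      show chiAux (i+2) - derivative (chiAux (i+2)) = chi (i+2)
      rw [chiAux, chi]
      simp only [derivative_add, derivative_mul, derivative_pow, derivative_X, derivative_C]
      have hX : X * chiAux i = chi (i+1) := X_mul_chiAux i
      have e1 : chiAux i = derivative (chiAux i) + chi i := by rw [← h1]; ring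
      have e2 : chiAux (i+1) = derivative (chiAux (i+1)) + chi (i+1) := by rw [← h2]; ring
      simp only [map_add, map_mul, map_ofNat, map_one, Polynomial.C_eq_intCast, Polynomial.C_eq_natCast, Nat.cast_ofNat] at *
      push_cast at *
      linear_combination (X:Polynomial ℤ)^2 * h1 + (2*(i:Polynomial ℤ)+3) * h2 - 2 * hX

lemma chi_nonneg (i : ℕ) (r : ℝ) (hr : 0 ≤ r) : 0 ≤ (aeval r (chi i) : ℝ) := by
  induction i using Nat.twoStepInduction with
  | zero => simp [chi]
  | one => simpa [chi] using hr
  | more i h1 h2 =>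
      show 0 ≤ (aeval r (chi (i+2)) : ℝ)
      rw [chi]
      simp only [map_add, map_mul, map_pow, aeval_X, aeval_C]
      have : (0:ℝ) ≤ 2 * (i:ℤ) + 1 := by positivity
      push_cast at this ⊢
      positivity

theorem integral_chi_exp (i : ℕ) (R : ℝ) (hR : 0 < R) :
    ∫ r in Set.Ioi R, (Polynomial.aeval r (chi i) : ℝ) * Real.exp (-r) =
      Real.exp (-R) * (Polynomial.aeval R (chi (i+1)) : ℝ) / R := by
  set p : Polynomial ℝ := (chiAux i).map (Int.castRingHom ℝ) with hp
  have haev : ∀ x : ℝ, (aeval x (chiAux i) : ℝ) = p.eval x := by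
    intro x; rw [hp, eval_map]; rfl
  have key : ∫ r in Set.Ioi R, (aeval r (chi i) : ℝ) * Real.exp (-r)
      = 0 - (-(Real.exp (-R) * p.eval R)) := by
    apply MeasureTheory.integral_Ioi_of_hasDerivAt_of_nonneg'
      (g := fun r => -(Real.exp (-r) * p.eval r))
    · intro x _
      have h1 : HasDerivAt (fun r : ℝ => Real.exp (-r)) (-Real.exp (-x)) x := by
        simpa using (hasDerivAt_neg x).exp
      have h2 : HasDerivAt (fun r : ℝ => p.eval r) (p.derivative.eval x) x :=
        p.hasDerivAt x
      have := (h1.mul h2).neg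
      convert this using 1
      case e'_4 => rfl
      case e'_5 => rfl
      case e'_8 => rfl
      have hd : (aeval x (chi i) : ℝ) = p.eval x - p.derivative.eval x := by
        rw [← chiAux_sub_deriv i]
        simp only [map_sub, haev]
        congr 1
        rw [hp, derivative_map, eval_map]; rfl
      rw [hd]; ring
    · intro x hx
      have hx0 : (0:ℝ) ≤ x := le_of_lt (lt_trans hR hx)
      exact mul_nonneg (chi_nonneg i x hx0) (Real.exp_pos _).le
    · have : Filter.Tendsto (fun x : ℝ => p.eval x / Real.exp x) Filter.atTop (nhds 0) :=
        Polynomial.tendsto_div_exp_atTop p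
      have := this.neg
      simp only [neg_zero] at this
      refine this.congr (fun x => ?_)
      rw [Real.exp_neg]
      field_simp
  rw [key]
  have hchi : (aeval R (chi (i+1)) : ℝ) = R * p.eval R := by
    rw [← X_mul_chiAux i, map_mul, aeval_X, haev]
  rw [hchi]
  field_simp
  ring
end

section
/- The generating function of the reverse Bessel polynomials has the Thron-type continued fraction expansion Σ_{i≥0} t^i χ_i(R) = 1/(1 − Rt/(1 − t/(1 − Rt − 2t/(1 − Rt − 3t/(1 − Rt − 4t/(1 − ···)))))), as an identity of formal power series in t over ℤ[R]: the depth-N truncation of the continued fraction agrees with the generating function modulo t^{N}. -/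
/-- Numerator coefficients of the Thron-type continued fraction: α = (R, 1, 2, 3, 4, …). -/
noncomputable def cfAlpha : ℕ → RatFunc ℚ :=
  fun k => if k = 1 then RatFunc.X else ((k - 1 : ℕ) : RatFunc ℚ)

/-- Linear coefficients of the continued fraction: δ = (0, 0, R, R, R, …). -/
noncomputable def cfDelta : ℕ → RatFunc ℚ :=
  fun k => if k ≤ 2 then 0 else RatFunc.X

/-- The depth-`d` truncation of the continued fraction, starting at level `k`
(levels are 1-indexed): `cfTrunc 0 k = 1` and
`cfTrunc (d+1) k = (1 - δ_k t - α_k t · cfTrunc d (k+1))⁻¹`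
as a formal power series in `t` over the field ℚ(R). -/
noncomputable def cfTrunc : ℕ → ℕ → PowerSeries (RatFunc ℚ)
  | 0, _ => 1
  | (d+1), k =>
      (1 - PowerSeries.C (cfDelta k) * PowerSeries.X
         - PowerSeries.C (cfAlpha k) * PowerSeries.X * cfTrunc d (k+1))⁻¹

namespace ChiCF

open PowerSeries Finset

abbrev K : Type := RatFunc ℚ
abbrev PS : Type := PowerSeries K

/-- Coefficients of the exact tails of the continued fraction. -/
noncomputable def cc : ℕ → ℕ → K
  | 0, _ => 1
  | (n+1), k => cfDelta k * cc n k +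
      cfAlpha k * ∑ j ∈ (Finset.range (n+1)).attach, cc j.1 k * cc (n - j.1) (k+1)
termination_by n _ => n
decreasing_by
  all_goals first
    | omega
    | (have := j.2; simp only [Finset.mem_range] at this; omega)

lemma cc_zero (k : ℕ) : cc 0 k = 1 := by rw [cc]

lemma cc_succ (n k : ℕ) : cc (n+1) k = cfDelta k * cc n k +
    cfAlpha k * ∑ j ∈ Finset.range (n+1), cc j k * cc (n - j) (k+1) := by
  rw [cc]
  congr 1
  congr 1
  exact Finset.sum_attach (Finset.range (n+1)) (fun j => cc j k * cc (n - j) (k+1))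

/-- The exact tail at level `k`. -/
noncomputable def TT (k : ℕ) : PS := PowerSeries.mk fun n => cc n k

@[simp] lemma coeff_TT (n k : ℕ) : PowerSeries.coeff n (TT k) = cc n k := coeff_mk _ _

lemma constCoeff_TT (k : ℕ) : PowerSeries.constantCoeff (TT k) = 1 := by
  rw [← PowerSeries.coeff_zero_eq_constantCoeff_apply, coeff_TT, cc_zero]

/-- The exact tail equation. -/
lemma TT_eq (k : ℕ) : TT k = 1 + PowerSeries.C (cfDelta k) * X * TT k
    + PowerSeries.C (cfAlpha k) * X * (TT k * TT (k+1)) := by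
  ext n
  cases n with
  | zero =>
      simp [PowerSeries.coeff_zero_eq_constantCoeff_apply, constCoeff_TT, map_add, map_mul,
        PowerSeries.constantCoeff_X, cc_zero]
  | succ n =>
      rw [map_add, map_add, mul_assoc, mul_assoc, PowerSeries.coeff_C_mul,
        PowerSeries.coeff_C_mul, PowerSeries.coeff_succ_X_mul, PowerSeries.coeff_succ_X_mul,
        coeff_TT, coeff_TT, PowerSeries.coeff_mul, cc_succ]
      have h2 : ∑ p ∈ antidiagonal n,
            PowerSeries.coeff p.1 (TT k) * PowerSeries.coeff p.2 (TT (k+1))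
          = ∑ j ∈ Finset.range (n+1), cc j k * cc (n - j) (k+1) := by
        rw [Finset.Nat.sum_antidiagonal_eq_sum_range_succ_mk]
        simp
      rw [h2]
      have h1 : PowerSeries.coeff (n+1) (1 : PS) = 0 := by
        rw [PowerSeries.coeff_one]; simp
      rw [h1, zero_add]

lemma TT_mul_eq_one (k : ℕ) :
    (1 - PowerSeries.C (cfDelta k) * X - PowerSeries.C (cfAlpha k) * X * TT (k+1)) * TT k
      = 1 := by
  linear_combination TT_eq k

lemma TT_eq_inv (k : ℕ) :
    TT k = (1 - PowerSeries.C (cfDelta k) * X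
      - PowerSeries.C (cfAlpha k) * X * TT (k+1))⁻¹ := by
  rw [PowerSeries.eq_inv_iff_mul_eq_one]
  · rw [mul_comm]; exact TT_mul_eq_one k
  · simp [map_sub, map_mul, PowerSeries.constantCoeff_X]

/-- Truncations agree with the tails up to the truncation depth. -/
lemma trunc_coeff : ∀ d k i, i < d →
    PowerSeries.coeff i (cfTrunc d k) = cc i k := by
  intro d
  induction d with
  | zero => intro k i h; omega
  | succ d IH =>
      intro k i hi
      set At : PS := 1 - PowerSeries.C (cfDelta k) * X
          - PowerSeries.C (cfAlpha k) * X * cfTrunc d (k+1) with hAt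
      set B : PS := 1 - PowerSeries.C (cfDelta k) * X
          - PowerSeries.C (cfAlpha k) * X * TT (k+1) with hB
      have hdvd0 : (X : PS)^d ∣ TT (k+1) - cfTrunc d (k+1) := by
        rw [PowerSeries.X_pow_dvd_iff]
        intro m hm
        rw [map_sub, coeff_TT, IH _ _ hm, sub_self]
      obtain ⟨W, hW⟩ := hdvd0
      have hdvd : (X : PS)^(d+1) ∣ At - B := by
        refine ⟨PowerSeries.C (cfAlpha k) * W, ?_⟩
        have e : At - B
            = PowerSeries.C (cfAlpha k) * X * (TT (k+1) - cfTrunc d (k+1)) := by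
          rw [hAt, hB]; ring
        rw [e, hW]; ring
      have hA1 : PowerSeries.constantCoeff At ≠ 0 := by
        rw [hAt]; simp [map_sub, map_mul, PowerSeries.constantCoeff_X]
      have hB1 : PowerSeries.constantCoeff B ≠ 0 := by
        rw [hB]; simp [map_sub, map_mul, PowerSeries.constantCoeff_X]
      have h1 : At * At⁻¹ = 1 := PowerSeries.mul_inv_cancel _ hA1
      have h2 : B * B⁻¹ = 1 := PowerSeries.mul_inv_cancel _ hB1
      have hinv : At⁻¹ - B⁻¹ = At⁻¹ * (B - At) * B⁻¹ := by
        linear_combination B⁻¹ * h1 - At⁻¹ * h2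
      have hdvd2 : (X : PS)^(d+1) ∣ At⁻¹ - B⁻¹ := by
        rw [hinv]
        have h3 : (X : PS)^(d+1) ∣ B - At := by
          have := dvd_neg.2 hdvd
          rwa [neg_sub] at this
        exact Dvd.dvd.mul_right (Dvd.dvd.mul_left h3 _) _
      have hco : PowerSeries.coeff i (At⁻¹ - B⁻¹) = 0 :=
        PowerSeries.X_pow_dvd_iff.1 hdvd2 i hi
      have h4 : PowerSeries.coeff i (cfTrunc (d+1) k) = PowerSeries.coeff i At⁻¹ := by
        rw [cfTrunc, hAt]
      rw [h4]
      rw [map_sub, sub_eq_zero] at hco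
      rw [hco, ← TT_eq_inv, coeff_TT]

/-! ### The Riccati ladder -/

noncomputable def q0 (k : ℕ) : PS :=
  if k = 1 then -1 - (PowerSeries.C RatFunc.X + 1)*X else -1 - PowerSeries.C RatFunc.X*X
noncomputable def q1 (k : ℕ) : PS :=
  if k = 1 then 1 + X - (PowerSeries.C RatFunc.X)^2*X^2
  else if k = 2 then 1 + (2*PowerSeries.C RatFunc.X - 1)*X + (PowerSeries.C RatFunc.X)^2*X^2
  else 1 - X - (PowerSeries.C RatFunc.X)^2*X^2
noncomputable def q2 (k : ℕ) : PS :=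
  if k = 1 then 0
  else if k = 2 then -(PowerSeries.C RatFunc.X*X)
      - PowerSeries.C RatFunc.X*(PowerSeries.C RatFunc.X+1)*X^2
  else -(PowerSeries.C ((k-2 : ℕ) : K))*X*(1 + PowerSeries.C RatFunc.X*X)

noncomputable def Pf (k : ℕ) : PS :=
  2*X^2*(PowerSeries.derivativeFun (TT k)) - q0 k - q1 k * TT k - q2 k * (TT k)^2

lemma coeff_derivFun (f : PS) (n : ℕ) : PowerSeries.coeff n (PowerSeries.derivativeFun f)
    = PowerSeries.coeff (n + 1) f * (n + 1) := PowerSeries.coeff_derivative f n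

lemma derivFun_C (r : K) : PowerSeries.derivativeFun (PowerSeries.C r : PS) = 0 :=
  PowerSeries.derivative_C

lemma derivFun_X : PowerSeries.derivativeFun (X : PS) = 1 := by
  ext n
  rw [coeff_derivFun, PowerSeries.coeff_X, PowerSeries.coeff_one]
  cases n with
  | zero => simp
  | succ n => simp [Nat.succ_ne_zero]

lemma hD (k : ℕ) : PowerSeries.derivativeFun (TT k) =
    PowerSeries.C (cfDelta k) * (TT k + X * PowerSeries.derivativeFun (TT k))
    + PowerSeries.C (cfAlpha k) * (TT k * TT (k+1)
        + X * PowerSeries.derivativeFun (TT k) * TT (k+1)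
        + X * TT k * PowerSeries.derivativeFun (TT (k+1))) := by
  have h := congrArg PowerSeries.derivativeFun (TT_eq k)
  simp only [PowerSeries.derivativeFun_add, PowerSeries.derivativeFun_mul,
    PowerSeries.derivativeFun_one, derivFun_C, derivFun_X, smul_eq_mul] at h
  linear_combination h

lemma cfDelta_one : cfDelta 1 = 0 := by simp [cfDelta]
lemma cfDelta_two : cfDelta 2 = 0 := by simp [cfDelta]
lemma cfDelta_big (m : ℕ) : cfDelta (m+3) = RatFunc.X := by
  unfold cfDelta; rw [if_neg (by omega)]
lemma cfAlpha_one : cfAlpha 1 = RatFunc.X := by simp [cfAlpha]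
lemma cfAlpha_two : cfAlpha 2 = 1 := by norm_num [cfAlpha]
lemma cfAlpha_big (m : ℕ) : cfAlpha (m+3) = ((m+2 : ℕ) : K) := by
  unfold cfAlpha; rw [if_neg (by omega)]
  exact congrArg _ (by omega)

lemma q0_one : q0 1 = -1 - (PowerSeries.C RatFunc.X + 1)*X := if_pos rfl
lemma q0_ne (k : ℕ) (h : k ≠ 1) : q0 k = -1 - PowerSeries.C RatFunc.X*X := if_neg h
lemma q1_one : q1 1 = 1 + X - (PowerSeries.C RatFunc.X)^2*X^2 := if_pos rfl
lemma q1_two : q1 2 = 1 + (2*PowerSeries.C RatFunc.X - 1)*X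
    + (PowerSeries.C RatFunc.X)^2*X^2 := by
  unfold q1; rw [if_neg (by omega), if_pos rfl]
lemma q1_big (k : ℕ) (h : 3 ≤ k) : q1 k = 1 - X - (PowerSeries.C RatFunc.X)^2*X^2 := by
  unfold q1; rw [if_neg (by omega), if_neg (by omega)]
lemma q2_one : q2 1 = 0 := if_pos rfl
lemma q2_two : q2 2 = -(PowerSeries.C RatFunc.X*X)
    - PowerSeries.C RatFunc.X*(PowerSeries.C RatFunc.X+1)*X^2 := by
  unfold q2; rw [if_neg (by omega), if_pos rfl]
lemma q2_big (k : ℕ) (h : 3 ≤ k) : q2 k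
    = -(PowerSeries.C ((k-2 : ℕ) : K))*X*(1 + PowerSeries.C RatFunc.X*X) := by
  unfold q2; rw [if_neg (by omega), if_neg (by omega)]

lemma ladder_one : Pf 1 = PowerSeries.C (cfAlpha 1) * X * (TT 1)^2 * Pf 2 := by
  have hEq := TT_eq 1
  have hDq := hD 1
  rw [cfDelta_one, cfAlpha_one] at hEq hDq
  simp only [map_zero, zero_mul, add_zero, zero_add] at hEq hDq
  rw [Pf, Pf, q0_one, q1_one, q2_one, q0_ne 2 (by omega), q1_two, q2_two, cfAlpha_one]
  set R := PowerSeries.C (RatFunc.X : K)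
  set T := TT 1
  set S := TT 2
  set DT := PowerSeries.derivativeFun (TT 1)
  set DS := PowerSeries.derivativeFun (TT 2)
  linear_combination (2*X^2*T) * hDq
    - (2*X^2*DT + 2*X*T + (1 + (2*R - 1)*X + R^2*X^2)*T
        + (-(1+(R+1)*X))*((T - 1) + R*X*T*S)) * hEq

lemma ladder_two : Pf 2 = PowerSeries.C (cfAlpha 2) * X * (TT 2)^2 * Pf 3 := by
  have hEq := TT_eq 2
  have hDq := hD 2
  rw [cfDelta_two, cfAlpha_two] at hEq hDq
  simp only [map_zero, map_one, zero_mul, one_mul, add_zero, zero_add] at hEq hDq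
  rw [Pf, Pf, q0_ne 2 (by omega), q1_two, q2_two, q0_ne 3 (by omega),
    q1_big 3 (by omega), q2_big 3 (by omega), cfAlpha_two]
  have e1 : ((3-2 : ℕ) : K) = 1 := by norm_num
  rw [e1, map_one]
  set R := PowerSeries.C (RatFunc.X : K)
  set T := TT 2
  set S := TT 3
  set DT := PowerSeries.derivativeFun (TT 2)
  set DS := PowerSeries.derivativeFun (TT 3)
  linear_combination (2*X^2*T) * hDq
    - (2*X^2*DT + 2*X*T + (1 - X - R^2*X^2)*T
        + (-(1+R*X))*((T - 1) + X*T*S)) * hEq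

lemma ladder_big (m : ℕ) : Pf (m+3) = PowerSeries.C (cfAlpha (m+3)) * X * (TT (m+3))^2
    * Pf (m+4) := by
  have hEq := TT_eq (m+3)
  have hDq := hD (m+3)
  rw [cfDelta_big, cfAlpha_big] at hEq hDq
  rw [Pf, Pf, q0_ne _ (by omega), q1_big _ (by omega), q2_big _ (by omega),
    q0_ne _ (by omega), q1_big (m+4) (by omega), q2_big (m+4) (by omega), cfAlpha_big]
  have e1 : (m+3-2 : ℕ) = m+1 := rfl
  have e2 : (m+4-2 : ℕ) = m+2 := rfl
  rw [e1, e2]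
  have c1 : ((m+1 : ℕ) : K) = ((m : ℕ) : K) + 1 := by push_cast; ring
  have c2 : ((m+2 : ℕ) : K) = ((m : ℕ) : K) + 2 := by push_cast; ring
  rw [c2] at hEq hDq
  rw [c1, c2]
  simp only [map_add, map_one, map_ofNat] at hEq hDq ⊢
  set R := PowerSeries.C (RatFunc.X : K)
  set A := PowerSeries.C ((m : ℕ) : K)
  set T := TT (m+3)
  set S := TT (m+4)
  set DT := PowerSeries.derivativeFun (TT (m+3))
  set DS := PowerSeries.derivativeFun (TT (m+4))
  linear_combination (2*X^2*T) * hDq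
    - (2*X^2*DT + 2*X*T + (1 - X - R^2*X^2)*T
        + (-(1+R*X))*((T - 1 - R*X*T) + (A+2)*X*T*S)) * hEq

lemma ladder (k : ℕ) (hk : 1 ≤ k) :
    Pf k = PowerSeries.C (cfAlpha k) * X * (TT k)^2 * Pf (k+1) := by
  match k with
  | 1 => exact ladder_one
  | 2 => exact ladder_two
  | (m+3) => exact ladder_big m

lemma Pf_zero (n : ℕ) : ∀ k, 1 ≤ k → PowerSeries.coeff n (Pf k) = 0 := by
  induction n using Nat.strong_induction_on with
  | _ n IH =>
      intro k hk
      rw [ladder k hk]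
      have e : PowerSeries.C (cfAlpha k) * X * (TT k)^2 * Pf (k+1)
          = X * (PowerSeries.C (cfAlpha k) * (TT k)^2 * Pf (k+1)) := by ring
      rw [e]
      cases n with
      | zero =>
          simp [PowerSeries.coeff_zero_eq_constantCoeff_apply, map_mul,
            PowerSeries.constantCoeff_X]
      | succ m =>
          rw [PowerSeries.coeff_succ_X_mul, PowerSeries.coeff_mul]
          apply Finset.sum_eq_zero
          rintro ⟨i, j⟩ hij
          have hj : j ≤ m := by
            have := Finset.HasAntidiagonal.mem_antidiagonal.1 hij; omega
          rw [IH j (by omega) (k+1) (by omega), mul_zero]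

/-! ### Extracting the recurrence for the value of the continued fraction -/

lemma coeff_shift2 (f : PS) (n : ℕ) : PowerSeries.coeff (n+2) (X^2 * f)
    = PowerSeries.coeff n f := PowerSeries.coeff_X_pow_mul f 2 n

lemma cc_one_one : cc 1 1 = RatFunc.X := by
  rw [cc_succ]
  simp [cc_zero, cfDelta_one, cfAlpha_one]

lemma cc_rec (n : ℕ) : cc (n+2) 1 = (2*(n : K)+1) * cc (n+1) 1 + RatFunc.X^2 * cc n 1 := by
  have h0 := Pf_zero (n+2) 1 (le_refl 1)
  have hrw : Pf 1 = (X^2*PowerSeries.derivativeFun (TT 1)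
      + X^2*PowerSeries.derivativeFun (TT 1)) + 1
      + (PowerSeries.C RatFunc.X * X + X) - TT 1 - X*TT 1
      + PowerSeries.C (RatFunc.X^2) * (X^2 * TT 1) := by
    rw [Pf, q0_one, q1_one, q2_one, map_pow]
    ring
  rw [hrw] at h0
  simp only [map_add, map_sub] at h0
  have hA : PowerSeries.coeff (n+2) (X^2*PowerSeries.derivativeFun (TT 1))
      = cc (n+1) 1 * ((n:K)+1) := by
    rw [coeff_shift2, coeff_derivFun, coeff_TT]
    try push_cast
    try ring
  have hB : PowerSeries.coeff (n+2) (TT 1) = cc (n+2) 1 := coeff_TT _ _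
  have hC : PowerSeries.coeff (n+2) (X*TT 1) = cc (n+1) 1 := by
    rw [PowerSeries.coeff_succ_X_mul, coeff_TT]
  have hD2 : PowerSeries.coeff (n+2) (PowerSeries.C (RatFunc.X^2) * (X^2 * TT 1))
      = RatFunc.X^2 * cc n 1 := by
    rw [PowerSeries.coeff_C_mul, coeff_shift2, coeff_TT]
  have hE2 : PowerSeries.coeff (n+2) (PowerSeries.C (RatFunc.X : K) * X) = 0 := by
    rw [PowerSeries.coeff_C_mul, PowerSeries.coeff_X, if_neg (by omega), mul_zero]
  have hX : PowerSeries.coeff (n+2) (X : PS) = 0 := by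
    rw [PowerSeries.coeff_X, if_neg (by omega)]
  have h1 : PowerSeries.coeff (n+2) (1 : PS) = 0 := by
    rw [PowerSeries.coeff_one]; simp
  rw [hA, hB, hC, hD2, hE2, hX, h1] at h0
  linear_combination -h0

lemma cc_chi : ∀ n, cc n 1 = Polynomial.aeval (RatFunc.X : K) (chi n) := by
  intro n
  induction n using Nat.strong_induction_on with
  | _ n IH =>
      match n with
      | 0 => rw [cc_zero, chi]; simp
      | 1 => rw [cc_one_one, chi]; simp
      | (m+2) =>
          rw [cc_rec, IH (m+1) (by omega), IH m (by omega)]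
          have hc : chi (m+2) = Polynomial.X^2*chi m
              + Polynomial.C (2*(m:ℤ)+1)*chi (m+1) := by rw [chi]
          rw [hc, map_add, map_mul, map_mul, map_pow, Polynomial.aeval_X, Polynomial.aeval_C,
            eq_intCast]
          push_cast
          ring

end ChiCF

/-- The generating function of the reverse Bessel polynomials has the Thron-type
continued fraction expansion with α = (R,1,2,3,4,…) and δ = (0,0,R,R,R,…):
the depth-N truncation agrees with Σ tⁱ χᵢ(R) modulo t^N. -/
theorem chi_genFun_thron_cf (N i : ℕ) (hi : i < N) :
    PowerSeries.coeff i (cfTrunc N 1) =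
      Polynomial.aeval (RatFunc.X : RatFunc ℚ) (chi i) := by
  rw [ChiCF.trunc_coeff N 1 i hi, ChiCF.cc_chi]
end
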